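/- For threshold u ∈ (0,1), let k = (π₀/(1-π₀))·((1-u)/u)·e^{λ/2}. If k ≤ 1, then ψ(x) < u for all x > 0; if k > 1, then ψ(x) < u if and only if x > (1/λ)·[ln(k + √(k² - 1))]². -/

import Mathlib

open Real

theorem lfdr_threshold (p0 l u : ℝ) (hp0 : p0 ∈ Set.Ioo (0:ℝ) 1) (hl : 0 < l)
    (hu : u ∈ Set.Ioo (0:ℝ) 1) :
    let ψ : ℝ → ℝ := fun x =>
      p0 / (p0 + (1 - p0) * Real.exp (-l / 2) * Real.cosh (Real.sqrt (l * x)))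
    let k : ℝ := (p0 / (1 - p0)) * ((1 - u) / u) * Real.exp (l / 2)
    (k ≤ 1 → ∀ x : ℝ, 0 < x → ψ x < u) ∧
    (1 < k → ∀ x : ℝ, 0 < x →
      (ψ x < u ↔ x > (1 / l) * (Real.log (k + Real.sqrt (k ^ 2 - 1))) ^ 2)) := by
  intro ψ k
  obtain ⟨hp0a, hp0b⟩ := hp0
  obtain ⟨hua, hub⟩ := hu
  have h1p0 : 0 < 1 - p0 := by linarith
  have h1u : 0 < 1 - u := by linarith
  have hexp : (0:ℝ) < Real.exp (-l / 2) := Real.exp_pos _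
  have hkdef : k = (p0 / (1 - p0)) * ((1 - u) / u) * Real.exp (l / 2) := rfl
  have he : Real.exp (-l / 2) = (Real.exp (l / 2))⁻¹ := by
    rw [← Real.exp_neg]; ring_nf
  have hk : p0 * (1 - u) = k * (u * ((1 - p0) * Real.exp (-l / 2))) := by
    rw [hkdef, he]
    field_simp
  have hmul : (0:ℝ) < u * ((1 - p0) * Real.exp (-l / 2)) := by positivity
  -- Key equivalence: ψ x < u ↔ k < cosh (√(l x))
  have key : ∀ x : ℝ, 0 < x → (ψ x < u ↔ k < Real.cosh (Real.sqrt (l * x))) := by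
    intro x hx
    set s := Real.sqrt (l * x) with hs
    have hcosh : (1:ℝ) ≤ Real.cosh s := Real.one_le_cosh s
    have hD : 0 < p0 + (1 - p0) * Real.exp (-l / 2) * Real.cosh s := by
      have : 0 < (1 - p0) * Real.exp (-l / 2) * Real.cosh s := by positivity
      linarith
    have hiff : k < Real.cosh s ↔
        k * (u * ((1 - p0) * Real.exp (-l / 2))) <
          Real.cosh s * (u * ((1 - p0) * Real.exp (-l / 2))) := (mul_lt_mul_iff_of_pos_right hmul).symm
    show p0 / _ < u ↔ _
    rw [div_lt_iff₀ hD, hiff, ← hk]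
    constructor <;> intro h <;> nlinarith [h]
  refine ⟨?_, ?_⟩
  · intro hk1 x hx
    rw [key x hx]
    have hspos : 0 < Real.sqrt (l * x) := Real.sqrt_pos.mpr (by positivity)
    exact lt_of_le_of_lt hk1 (Real.one_lt_cosh.mpr (ne_of_gt hspos))
  · intro hk1 x hx
    have hksq : 0 ≤ k ^ 2 - 1 := by nlinarith
    have hsq : Real.sqrt (k ^ 2 - 1) ^ 2 = k ^ 2 - 1 := Real.sq_sqrt hksq
    have hsqnn : 0 ≤ Real.sqrt (k ^ 2 - 1) := Real.sqrt_nonneg _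
    have ht : 1 < k + Real.sqrt (k ^ 2 - 1) := by linarith
    set c := Real.log (k + Real.sqrt (k ^ 2 - 1)) with hc
    have hcpos : 0 < c := Real.log_pos ht
    have hexpc : Real.exp c = k + Real.sqrt (k ^ 2 - 1) := Real.exp_log (by linarith)
    have hinv : (k + Real.sqrt (k ^ 2 - 1)) * (k - Real.sqrt (k ^ 2 - 1)) = 1 := by
      nlinarith [hsq]
    have hinv' : (k + Real.sqrt (k ^ 2 - 1))⁻¹ = k - Real.sqrt (k ^ 2 - 1) :=
      inv_eq_of_mul_eq_one_right hinv
    have hcoshc : Real.cosh c = k := by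
      rw [Real.cosh_eq, Real.exp_neg, hexpc, hinv']
      ring
    rw [key x hx, ← hcoshc, Real.cosh_lt_cosh,
      abs_of_nonneg (le_of_lt hcpos), abs_of_nonneg (Real.sqrt_nonneg _),
      Real.lt_sqrt (le_of_lt hcpos)]
    rw [gt_iff_lt, one_div, inv_mul_lt_iff₀ hl]
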